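/- Let A be a commutative ring, t ∈ A a nonzero-divisor, and M an A-module. Suppose for all integers α, β > 0 there are exact sequences 0 → M/tᵃM → M/t^{α+β}M → M/tᵝM → 0 where the first map is multiplication by tᵝ. Let M̂ = lim_α M/tᵃM be the t-adic completion. Then multiplication by tᵝ is injective on M̂ and M̂/tᵝM̂ ≅ M/tᵝM for all β > 0. -/

import Mathlib

theorem AdicCompletion.transitionMap_mk {R : Type*} [CommRing R] (I : Ideal R)
    (M : Type*) [AddCommGroup M] [Module R M] {m n : ℕ} (hmn : m ≤ n) (x : M) :
    AdicCompletion.transitionMap I M hmn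
      (Submodule.Quotient.mk x : M ⧸ (I ^ n • ⊤ : Submodule R M)) =
      (Submodule.Quotient.mk x : M ⧸ (I ^ m • ⊤ : Submodule R M)) :=
  rfl

/-- if `t` is a nonzero-divisor on `A` and for all `α, β > 0` the sequences
`0 → M/tᵃM → M/t^{α+β}M → M/tᵝM → 0` (first map multiplication by `tᵝ`) are exact,
then multiplication by `tᵝ` is injective on the `t`-adic completion `M̂` and
`M̂/tᵝM̂ ≅ M/tᵝM` for all `β > 0`. -/
theorem adicCompletion_smul_injective_and_quotients
    {A : Type*} [CommRing A] (t : A) (ht : t ∈ nonZeroDivisors A)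
    (M : Type*) [AddCommGroup M] [Module A M]
    -- injectivity of `tᵝ : M/tᵃM → M/t^{α+β}M`:
    (hinj : ∀ α > 0, ∀ β > 0, ∀ x : M,
      t ^ β • x ∈ ((Ideal.span {t}) ^ (α + β) • ⊤ : Submodule A M) →
        x ∈ ((Ideal.span {t}) ^ α • ⊤ : Submodule A M))
    -- exactness in the middle: anything killed in `M/tᵝM` is `tᵝ • y` mod `t^{α+β}`:
    (hexact : ∀ α > 0, ∀ β > 0, ∀ x : M,
      x ∈ ((Ideal.span {t}) ^ β • ⊤ : Submodule A M) →
        ∃ y : M, x - t ^ β • y ∈ ((Ideal.span {t}) ^ (α + β) • ⊤ : Submodule A M)) :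
    ∀ β > 0,
      Function.Injective
        (fun x : AdicCompletion (Ideal.span {t}) M => t ^ β • x) ∧
      Function.Surjective (AdicCompletion.eval (Ideal.span {t}) M β) ∧
      LinearMap.ker (AdicCompletion.eval (Ideal.span {t}) M β)
        = Ideal.span {t ^ β} • (⊤ : Submodule A (AdicCompletion (Ideal.span {t}) M)) := by
  intro β hβ
  set I : Ideal A := Ideal.span {t} with hI
  have hmono : ∀ {m n : ℕ}, m ≤ n →
      (I ^ n • ⊤ : Submodule A M) ≤ (I ^ m • ⊤ : Submodule A M) :=
    fun hmn => Submodule.smul_mono_left (Ideal.pow_le_pow_right hmn)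
  have htop : (I ^ 0 • ⊤ : Submodule A M) = ⊤ := by
    simp [Ideal.one_eq_top, Submodule.top_smul]
  -- injectivity
  have inj0 : ∀ x : AdicCompletion I M, t ^ β • x = 0 → x = 0 := by
    intro x hx
    ext n
    rcases Nat.eq_zero_or_pos n with rfl | hn
    · have : Subsingleton (M ⧸ (I ^ 0 • ⊤ : Submodule A M)) :=
        Submodule.Quotient.subsingleton_iff.2 htop
      exact Subsingleton.elim _ _
    · obtain ⟨x', hx'⟩ := Submodule.Quotient.mk_surjective _ (x.val (n + β))
      have h1 : t ^ β • x' ∈ (I ^ (n + β) • ⊤ : Submodule A M) := by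
        rw [← Submodule.Quotient.mk_eq_zero, Submodule.Quotient.mk_smul, hx']
        have := congrArg (fun z : AdicCompletion I M => z.val (n + β)) hx
        simpa [AdicCompletion.val_smul] using this
      have h2 : x' ∈ (I ^ n • ⊤ : Submodule A M) := hinj n hn β hβ x' h1
      have h3 : x.val n = AdicCompletion.transitionMap I M (Nat.le_add_right n β) (x.val (n + β)) :=
        (x.property (Nat.le_add_right n β)).symm
      rw [h3, ← hx', AdicCompletion.transitionMap_mk]
      simpa [Submodule.Quotient.mk_eq_zero] using h2
  refine ⟨?_, AdicCompletion.eval_surjective I M β, ?_⟩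
  · intro a b hab
    have : t ^ β • (a - b) = 0 := by
      simp only at hab
      rw [smul_sub, hab, sub_self]
    have := inj0 _ this
    exact sub_eq_zero.mp this
  · apply le_antisymm
    · -- kernel ≤ span{t^β} • ⊤
      intro x hx
      have hxβ : x.val β = 0 := hx
      -- choose lifts of x.val n
      have hlift : ∀ n : ℕ, ∃ m : M,
          (Submodule.Quotient.mk m : M ⧸ (I ^ n • ⊤ : Submodule A M)) = x.val n :=
        fun n => Submodule.Quotient.mk_surjective _ (x.val n)
      set xl : ∀ n : ℕ, M := fun n => (hlift n).choose with hxl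
      have hxls : ∀ n : ℕ,
          (Submodule.Quotient.mk (xl n) : M ⧸ (I ^ n • ⊤ : Submodule A M)) = x.val n :=
        fun n => (hlift n).choose_spec
      -- lifts are compatible
      have hcomp : ∀ {m n : ℕ} (hmn : m ≤ n), xl n - xl m ∈ (I ^ m • ⊤ : Submodule A M) := by
        intro m n hmn
        rw [← Submodule.Quotient.eq]
        have := x.property hmn
        rw [← hxls n, AdicCompletion.transitionMap_mk] at this
        rw [this, hxls m]
      -- each lift at level n+β lies in I^β • ⊤
      have hmemβ : ∀ n : ℕ, xl (n + β) ∈ (I ^ β • ⊤ : Submodule A M) := by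
        intro n
        rw [← Submodule.Quotient.mk_eq_zero]
        have := x.property (Nat.le_add_left β n)
        rw [← hxls (n + β), AdicCompletion.transitionMap_mk] at this
        rw [this, hxβ]
      have key : ∀ n : ℕ, ∃ y : M,
          xl (n + β) - t ^ β • y ∈ (I ^ (n + β) • ⊤ : Submodule A M) := by
        intro n
        rcases Nat.eq_zero_or_pos n with rfl | hn
        · exact ⟨0, by simpa using hmemβ 0⟩
        · exact hexact n hn β hβ (xl (n + β)) (hmemβ n)
      set yc : ∀ n : ℕ, M := fun n => (key n).choose with hyc
      have hycs : ∀ n : ℕ, xl (n + β) - t ^ β • yc n ∈ (I ^ (n + β) • ⊤ : Submodule A M) :=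
        fun n => (key n).choose_spec
      -- the yc's are compatible mod I^m
      have hyccomp : ∀ {m n : ℕ}, m ≤ n → yc n - yc m ∈ (I ^ m • ⊤ : Submodule A M) := by
        intro m n hmn
        rcases Nat.eq_zero_or_pos m with rfl | hm
        · rw [htop]; exact Submodule.mem_top
        · apply hinj m hm β hβ
          have h1 := hycs m
          have h2 := hmono (Nat.add_le_add_right hmn β) (hycs n)
          have h3 := hcomp (Nat.add_le_add_right hmn β)
          have : t ^ β • (yc n - yc m) =
              (xl (m + β) - t ^ β • yc m) - (xl (n + β) - t ^ β • yc n)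
                + (xl (n + β) - xl (m + β)) := by rw [smul_sub]; abel
          rw [this]
          exact Submodule.add_mem _ (Submodule.sub_mem _ h1 h2) h3
      -- assemble y
      set y : AdicCompletion I M := ⟨fun n => Submodule.Quotient.mk (yc n), by
        intro m n hmn
        rw [AdicCompletion.transitionMap_mk, Submodule.Quotient.eq]
        exact hyccomp hmn⟩ with hy
      have hxy : x = (t ^ β : A) • y := by
        ext n
        rw [AdicCompletion.val_smul]
        show x.val n = t ^ β • Submodule.Quotient.mk (yc n)
        rw [← Submodule.Quotient.mk_smul]
        have h3 : x.val n = AdicCompletion.transitionMap I M (Nat.le_add_right n β) (x.val (n + β)) :=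
          (x.property (Nat.le_add_right n β)).symm
        rw [h3, ← hxls (n + β), AdicCompletion.transitionMap_mk, Submodule.Quotient.eq]
        exact hmono (Nat.le_add_right n β) (hycs n)
      rw [hxy]
      exact Submodule.smul_mem_smul (Ideal.mem_span_singleton_self _) Submodule.mem_top
    · -- span{t^β} • ⊤ ≤ kernel
      rw [Submodule.smul_le]
      intro r hr x _
      rw [LinearMap.mem_ker, map_smul]
      have hrI : r ∈ I ^ β := by
        rw [hI, Ideal.span_singleton_pow]; exact hr
      obtain ⟨a, ha⟩ := Submodule.Quotient.mk_surjective _ (AdicCompletion.eval I M β x)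
      rw [← ha, ← Submodule.Quotient.mk_smul, Submodule.Quotient.mk_eq_zero]
      exact Submodule.smul_mem_smul hrI Submodule.mem_top
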